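/- Let f, g : (0,∞) → ℝ be convex, twice continuously differentiable functions with f(1) = g(1) = 0, f'(1) = g'(1) = 0, f''(1) > 0 and g''(1) > 0. Suppose liminf_{t→0+} g(t)/f(t) > 0 and liminf_{t→∞} g(t)/f(t) > 0 (limits inferior taken in the extended reals). Then there exists β > 0 such that D_g(P,Q) ≥ β·D_f(P,Q) holds for every n and all probability vectors P, Q of length n with all entries strictly positive. -/

import Mathlib

open Finset Filter Topology

open Set in

lemma tangent_line' {f : ℝ → ℝ} {S : Set ℝ} (hfc : ConvexOn ℝ S f) {x y : ℝ}
    (hx : x ∈ S) (hy : y ∈ S) (hfd : DifferentiableAt ℝ f x) :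
    f x + deriv f x * (y - x) ≤ f y := by
  rcases lt_trichotomy x y with h | h | h
  · have h2 := hfc.deriv_le_slope hx hy h hfd
    rw [slope_def_field, le_div_iff₀ (by linarith)] at h2
    nlinarith
  · simp [h]
  · have h2 := hfc.slope_le_deriv hy hx h hfd
    rw [slope_def_field, div_le_iff₀ (by linarith)] at h2
    nlinarith

lemma quad_nonneg' {ψ : ℝ → ℝ} {a b : ℝ} (h0a : 0 < a) (ha1 : a < 1) (h1b : 1 < b)
    (hψ : ContDiffOn ℝ 2 ψ (Set.Ioi 0))
    (h'' : ∀ t ∈ Set.Ioo a b, 0 ≤ deriv (deriv ψ) t)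
    (h1 : ψ 1 = 0) (h'1 : deriv ψ 1 = 0) :
    ∀ t ∈ Set.Icc a b, 0 ≤ ψ t := by
  have hsub : Set.Icc a b ⊆ Set.Ioi 0 := fun t ht => lt_of_lt_of_le h0a ht.1
  have hsub' : Set.Ioo a b ⊆ Set.Ioi 0 := fun t ht => lt_trans h0a ht.1
  have hd1 : ContDiffOn ℝ 1 (deriv ψ) (Set.Ioi 0) :=
    hψ.deriv_of_isOpen isOpen_Ioi (by norm_num)
  have hdiff : DifferentiableOn ℝ ψ (Set.Ioi 0) := hψ.differentiableOn (by norm_num)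
  have hdiff2 : DifferentiableOn ℝ (deriv ψ) (Set.Ioi 0) := hd1.differentiableOn (by norm_num)
  have hconv : ConvexOn ℝ (Set.Icc a b) ψ := by
    apply convexOn_of_deriv2_nonneg (convex_Icc a b) (hψ.continuousOn.mono hsub)
    · rw [interior_Icc]; exact hdiff.mono hsub'
    · rw [interior_Icc]; exact hdiff2.mono hsub'
    · rw [interior_Icc]; intro x hx
      have h2 : deriv^[2] ψ x = deriv (deriv ψ) x := by
        simp [Function.iterate_succ, Function.iterate_one]
      rw [h2]; exact h'' x hx
  intro t ht
  have h1m : (1:ℝ) ∈ Set.Icc a b := ⟨ha1.le, h1b.le⟩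
  have hda : DifferentiableAt ℝ ψ 1 :=
    (hdiff 1 (by norm_num)).differentiableAt (isOpen_Ioi.mem_nhds (by norm_num))
  have := tangent_line' hconv h1m ht hda
  rw [h1, h'1] at this
  linarith

lemma quad_lower' {φ : ℝ → ℝ} {a b c : ℝ} (h0a : 0 < a) (ha1 : a < 1) (h1b : 1 < b)
    (hφ : ContDiffOn ℝ 2 φ (Set.Ioi 0)) (hφ1 : φ 1 = 0) (hφ'1 : deriv φ 1 = 0)
    (hdd : ∀ t ∈ Set.Ioo a b, 2 * c ≤ deriv (deriv φ) t) :
    ∀ t ∈ Set.Icc a b, c * (t - 1) ^ 2 ≤ φ t := by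
  set q : ℝ → ℝ := fun s => c * (s - 1) ^ 2 with hq_def
  have hq : ∀ t : ℝ, HasDerivAt q (2 * c * (t - 1)) t := by
    intro t
    have h := (((hasDerivAt_id t).sub_const 1).pow 2).const_mul c
    exact h.congr_deriv (by simp; ring)
  have hq' : ∀ t : ℝ, HasDerivAt (fun s => 2 * c * (s - 1)) (2 * c) t := by
    intro t
    simpa using ((hasDerivAt_id t).sub_const 1).const_mul (2 * c)
  have hdiffφ : DifferentiableOn ℝ φ (Set.Ioi 0) := hφ.differentiableOn (by norm_num)
  have hd1 : ContDiffOn ℝ 1 (deriv φ) (Set.Ioi 0) :=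
    hφ.deriv_of_isOpen isOpen_Ioi (by norm_num)
  have hdiff2 : DifferentiableOn ℝ (deriv φ) (Set.Ioi 0) := hd1.differentiableOn (by norm_num)
  set ψ : ℝ → ℝ := fun s => φ s - q s with hψ_def
  have hψC2 : ContDiffOn ℝ 2 ψ (Set.Ioi 0) := by
    apply hφ.sub
    exact (ContDiff.contDiffOn (by fun_prop))
  have hderivψ : ∀ t ∈ Set.Ioi (0:ℝ), deriv ψ t = deriv φ t - 2 * c * (t - 1) := by
    intro t ht
    have hdφ : HasDerivAt φ (deriv φ t) t :=
      ((hdiffφ t ht).differentiableAt (isOpen_Ioi.mem_nhds ht)).hasDerivAt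
    exact (hdφ.sub (hq t)).deriv
  have hψ1 : ψ 1 = 0 := by simp [hψ_def, hq_def, hφ1]
  have hψ'1 : deriv ψ 1 = 0 := by
    rw [hderivψ 1 (by norm_num), hφ'1]; ring
  have h'' : ∀ t ∈ Set.Ioo a b, 0 ≤ deriv (deriv ψ) t := by
    intro t ht
    have htI : t ∈ Set.Ioi (0:ℝ) := lt_trans h0a ht.1
    have heq : deriv ψ =ᶠ[nhds t] fun s => deriv φ s - 2 * c * (s - 1) := by
      filter_upwards [isOpen_Ioi.mem_nhds htI] with s hs
      exact hderivψ s hs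
    rw [heq.deriv_eq]
    have hdφ' : HasDerivAt (deriv φ) (deriv (deriv φ) t) t :=
      ((hdiff2 t htI).differentiableAt (isOpen_Ioi.mem_nhds htI)).hasDerivAt
    rw [(hdφ'.fun_sub (hq' t)).deriv]
    have := hdd t ht
    linarith
  have := quad_nonneg' h0a ha1 h1b hψC2 h'' hψ1 hψ'1
  intro t ht
  have := this t ht
  simp only [hψ_def, hq_def] at this
  linarith


lemma pos_off' {φ : ℝ → ℝ} (hφ : ConvexOn ℝ (Set.Ioi 0) φ) (hφ1 : φ 1 = 0) {δ : ℝ}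
    (hδ : 0 < δ) (hδ1 : δ < 1) (hL : 0 < φ (1 - δ)) (hR : 0 < φ (1 + δ)) :
    ∀ t, 0 < t → (t ≤ 1 - δ ∨ 1 + δ ≤ t) → 0 < φ t := by
  intro t ht hcase
  rcases hcase with h | h
  · rcases eq_or_lt_of_le h with rfl | h'
    · exact hL
    · set θ : ℝ := δ / (1 - t) with hθ_def
      have h1t : 0 < 1 - t := by linarith
      have hθpos : 0 < θ := div_pos hδ h1t
      have hθle : θ ≤ 1 := by
        rw [div_le_one h1t]; linarith
      have hcomb := hφ.2 (Set.mem_Ioi.mpr ht) (Set.mem_Ioi.mpr one_pos)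
        hθpos.le (by linarith : (0:ℝ) ≤ 1 - θ) (by ring)
      have harg : θ • t + (1 - θ) • (1:ℝ) = 1 - δ := by
        simp only [smul_eq_mul, hθ_def]
        field_simp
        ring
      rw [harg, hφ1] at hcomb
      simp only [smul_eq_mul] at hcomb
      nlinarith
  · rcases eq_or_lt_of_le h with rfl | h'
    · exact hR
    · set θ : ℝ := δ / (t - 1) with hθ_def
      have h1t : 0 < t - 1 := by linarith
      have hθpos : 0 < θ := div_pos hδ h1t
      have hθle : θ ≤ 1 := by
        rw [div_le_one h1t]; linarith
      have hcomb := hφ.2 (Set.mem_Ioi.mpr ht) (Set.mem_Ioi.mpr one_pos)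
        hθpos.le (by linarith : (0:ℝ) ≤ 1 - θ) (by ring)
      have harg : θ • t + (1 - θ) • (1:ℝ) = 1 + δ := by
        simp only [smul_eq_mul, hθ_def]
        field_simp
        ring
      rw [harg, hφ1] at hcomb
      simp only [smul_eq_mul] at hcomb
      nlinarith

set_option maxHeartbeats 1000000 in
lemma pointwise_bound' (f g : ℝ → ℝ)
    (hf : ConvexOn ℝ (Set.Ioi 0) f) (hg : ConvexOn ℝ (Set.Ioi 0) g)
    (hfC2 : ContDiffOn ℝ 2 f (Set.Ioi 0)) (hgC2 : ContDiffOn ℝ 2 g (Set.Ioi 0))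
    (hf1 : f 1 = 0) (hg1 : g 1 = 0)
    (hf'1 : deriv f 1 = 0) (hg'1 : deriv g 1 = 0)
    (hf''1 : 0 < iteratedDeriv 2 f 1) (hg''1 : 0 < iteratedDeriv 2 g 1)
    (hlim0 : (0 : EReal) < liminf (fun t => ((g t / f t : ℝ) : EReal)) (𝓝[>] (0:ℝ)))
    (hlimtop : (0 : EReal) < liminf (fun t => ((g t / f t : ℝ) : EReal)) atTop) :
    (∀ t ∈ Set.Ioi (0:ℝ), 0 ≤ f t) ∧
      ∃ β > (0:ℝ), ∀ t ∈ Set.Ioi (0:ℝ), β * f t ≤ g t := by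
  set A := iteratedDeriv 2 f 1 with hA_def
  set B := iteratedDeriv 2 g 1 with hB_def
  have hi2 : ∀ φ : ℝ → ℝ, iteratedDeriv 2 φ = deriv (deriv φ) := by
    intro φ; rw [iteratedDeriv_succ, iteratedDeriv_one]
  -- differentiability
  have hdf : DifferentiableOn ℝ f (Set.Ioi 0) := hfC2.differentiableOn (by norm_num)
  have hdg : DifferentiableOn ℝ g (Set.Ioi 0) := hgC2.differentiableOn (by norm_num)
  have hdfa1 : DifferentiableAt ℝ f 1 :=
    (hdf 1 (by norm_num)).differentiableAt (isOpen_Ioi.mem_nhds (by norm_num))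
  have hdga1 : DifferentiableAt ℝ g 1 :=
    (hdg 1 (by norm_num)).differentiableAt (isOpen_Ioi.mem_nhds (by norm_num))
  -- nonnegativity
  have hf0 : ∀ t ∈ Set.Ioi (0:ℝ), 0 ≤ f t := by
    intro t ht
    have := tangent_line' hf (Set.mem_Ioi.mpr one_pos) ht hdfa1
    rw [hf1, hf'1] at this; linarith
  have hg0 : ∀ t ∈ Set.Ioi (0:ℝ), 0 ≤ g t := by
    intro t ht
    have := tangent_line' hg (Set.mem_Ioi.mpr one_pos) ht hdga1
    rw [hg1, hg'1] at this; linarith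
  refine ⟨hf0, ?_⟩
  -- continuity of second derivatives at 1
  have hcf : ContinuousAt (deriv (deriv f)) 1 := by
    have c1 : ContDiffOn ℝ 1 (deriv f) (Set.Ioi 0) :=
      hfC2.deriv_of_isOpen isOpen_Ioi (by norm_num)
    have c0 : ContDiffOn ℝ 0 (deriv (deriv f)) (Set.Ioi 0) :=
      c1.deriv_of_isOpen isOpen_Ioi (by norm_num)
    exact (contDiffOn_zero.mp c0).continuousAt (isOpen_Ioi.mem_nhds (by norm_num))
  have hcg : ContinuousAt (deriv (deriv g)) 1 := by
    have c1 : ContDiffOn ℝ 1 (deriv g) (Set.Ioi 0) :=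
      hgC2.deriv_of_isOpen isOpen_Ioi (by norm_num)
    have c0 : ContDiffOn ℝ 0 (deriv (deriv g)) (Set.Ioi 0) :=
      c1.deriv_of_isOpen isOpen_Ioi (by norm_num)
    exact (contDiffOn_zero.mp c0).continuousAt (isOpen_Ioi.mem_nhds (by norm_num))
  have hA1 : deriv (deriv f) 1 = A := by rw [hA_def, hi2]
  have hB1 : deriv (deriv g) 1 = B := by rw [hB_def, hi2]
  have hev1 : ∀ᶠ t in 𝓝 (1:ℝ),
      deriv (deriv f) t ∈ Set.Ioo (A/2) (2*A) ∧ deriv (deriv g) t ∈ Set.Ioi (B/2) := by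
    have e1 : ∀ᶠ t in 𝓝 (1:ℝ), deriv (deriv f) t ∈ Set.Ioo (A/2) (2*A) := by
      apply hcf
      rw [hA1]
      exact Ioo_mem_nhds (by linarith) (by linarith)
    have e2 : ∀ᶠ t in 𝓝 (1:ℝ), deriv (deriv g) t ∈ Set.Ioi (B/2) := by
      apply hcg
      rw [hB1]
      exact Ioi_mem_nhds (by linarith)
    exact e1.and e2
  rw [Metric.eventually_nhds_iff] at hev1
  obtain ⟨ε', hε'pos, hε'⟩ := hev1
  -- tail at 0
  obtain ⟨r0, hr0l, hr0r⟩ := EReal.exists_between_coe_real hlim0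
  have hε₀pos : (0:ℝ) < r0 := by exact_mod_cast hr0l
  have hev0 : ∀ᶠ t in 𝓝[>] (0:ℝ), r0 < g t / f t := by
    filter_upwards [Filter.eventually_lt_of_lt_liminf hr0r] with t ht
    exact_mod_cast ht
  rw [eventually_nhdsWithin_iff, Metric.eventually_nhds_iff] at hev0
  obtain ⟨εa, hεapos, hεa⟩ := hev0
  set a : ℝ := min εa (1/2) with ha_def
  have hapos : 0 < a := lt_min hεapos (by norm_num)
  have hahalf : a ≤ 1/2 := min_le_right _ _
  have htail0 : ∀ t, 0 < t → t < a → r0 < g t / f t := by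
    intro t ht hta
    apply hεa
    · rw [Real.dist_eq, sub_zero, abs_of_pos ht]
      exact lt_of_lt_of_le hta (min_le_left _ _)
    · exact ht
  -- tail at ∞
  obtain ⟨r1, hr1l, hr1r⟩ := EReal.exists_between_coe_real hlimtop
  have hε₁pos : (0:ℝ) < r1 := by exact_mod_cast hr1l
  have hevtop : ∀ᶠ t in atTop, r1 < g t / f t := by
    filter_upwards [Filter.eventually_lt_of_lt_liminf hr1r] with t ht
    exact_mod_cast ht
  rw [eventually_atTop] at hevtop
  obtain ⟨b₀, hb₀⟩ := hevtop
  set b : ℝ := max b₀ 2 with hb_def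
  have hb2 : (2:ℝ) ≤ b := le_max_right _ _
  have htailtop : ∀ t, b ≤ t → r1 < g t / f t := fun t ht =>
    hb₀ t (le_trans (le_max_left _ _) ht)
  -- choice of δ
  set δ : ℝ := min (min (ε'/2) ((1-a)/2)) (min ((b-1)/2) (1/4)) with hδ_def
  have hδpos : 0 < δ := by
    apply lt_min (lt_min (by linarith) (by linarith)) (lt_min (by linarith) (by norm_num))
  have hδ4 : δ ≤ 1/4 := le_trans (min_le_right _ _) (min_le_right _ _)
  have hδε' : δ < ε' := lt_of_le_of_lt (le_trans (min_le_left _ _) (min_le_left _ _)) (by linarith)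
  have hδa : a < 1 - δ := by
    have : δ ≤ (1-a)/2 := le_trans (min_le_left _ _) (min_le_right _ _)
    linarith
  have hδb : 1 + δ < b := by
    have : δ ≤ (b-1)/2 := le_trans (min_le_right _ _) (min_le_left _ _)
    linarith
  have h0δ : 0 < 1 - δ := by linarith
  have hδ1 : δ < 1 := by linarith
  -- second-derivative bounds on Ioo (1-δ) (1+δ)
  have hIoo : ∀ t ∈ Set.Ioo (1-δ) (1+δ),
      deriv (deriv f) t ∈ Set.Ioo (A/2) (2*A) ∧ deriv (deriv g) t ∈ Set.Ioi (B/2) := by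
    intro t ht
    apply hε'
    rw [Real.dist_eq, abs_lt]
    constructor <;> [linarith [ht.1]; linarith [ht.2]]
  -- quadratic bounds on Icc (1-δ) (1+δ)
  have hgq : ∀ t ∈ Set.Icc (1-δ) (1+δ), (B/4) * (t-1)^2 ≤ g t := by
    apply quad_lower' h0δ (by linarith) (by linarith) hgC2 hg1 hg'1
    intro t ht
    have := (hIoo t ht).2
    simp only [Set.mem_Ioi] at this
    linarith
  have hfq : ∀ t ∈ Set.Icc (1-δ) (1+δ), (A/4) * (t-1)^2 ≤ f t := by
    apply quad_lower' h0δ (by linarith) (by linarith) hfC2 hf1 hf'1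
    intro t ht
    have := (hIoo t ht).1.1
    linarith
  have hfu : ∀ t ∈ Set.Icc (1-δ) (1+δ), f t ≤ A * (t-1)^2 := by
    have hneg : ∀ t ∈ Set.Icc (1-δ) (1+δ), (-A) * (t-1)^2 ≤ -f t := by
      apply quad_lower' h0δ (by linarith) (by linarith) hfC2.neg (by simp [hf1])
        (by rw [deriv.fun_neg, hf'1]; ring)
      intro t ht
      have h2 : deriv (deriv fun t => -f t) t = - deriv (deriv f) t := by
        have : (deriv fun t => -f t) = fun t => -deriv f t := funext fun s => deriv.neg
        rw [this, deriv.fun_neg]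
      rw [h2]
      have := (hIoo t ht).1.2
      linarith
    intro t ht
    have := hneg t ht
    linarith
  -- positivity off 1
  have hIccδ : (1-δ) ∈ Set.Icc (1-δ) (1+δ) := ⟨le_refl _, by linarith⟩
  have hIccδ' : (1+δ) ∈ Set.Icc (1-δ) (1+δ) := ⟨by linarith, le_refl _⟩
  have hA4 : (0:ℝ) < A/4 := by linarith
  have hB4 : (0:ℝ) < B/4 := by linarith
  have hδsq := pow_pos hδpos 2
  have hfL : 0 < f (1-δ) := lt_of_lt_of_le (by nlinarith [mul_pos hA4 hδsq]) (hfq _ hIccδ)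
  have hfR : 0 < f (1+δ) := lt_of_lt_of_le (by nlinarith [mul_pos hA4 hδsq]) (hfq _ hIccδ')
  have hgL : 0 < g (1-δ) := lt_of_lt_of_le (by nlinarith [mul_pos hB4 hδsq]) (hgq _ hIccδ)
  have hgR : 0 < g (1+δ) := lt_of_lt_of_le (by nlinarith [mul_pos hB4 hδsq]) (hgq _ hIccδ')
  have hfpos := pos_off' hf hf1 hδpos hδ1 hfL hfR
  have hgpos := pos_off' hg hg1 hδpos hδ1 hgL hgR
  -- compact middle part
  set K : Set ℝ := Set.Icc a b \ Set.Ioo (1-δ) (1+δ) with hK_def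
  have hKc : IsCompact K := isCompact_Icc.diff isOpen_Ioo
  have hKsub : K ⊆ Set.Ioi 0 := fun t ht => lt_of_lt_of_le hapos ht.1.1
  have haK : a ∈ K := by
    constructor
    · exact ⟨le_refl _, by linarith⟩
    · intro h
      exact absurd h.1 (by linarith)
  have hKoff : ∀ t ∈ K, t ≤ 1 - δ ∨ 1 + δ ≤ t := by
    intro t ht
    by_contra h
    push_neg at h
    exact ht.2 ⟨h.1, h.2⟩
  obtain ⟨t₀, ht₀K, hmin⟩ := hKc.exists_isMinOn ⟨a, haK⟩ (hgC2.continuousOn.mono hKsub)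
  obtain ⟨t₁, ht₁K, hmax⟩ := hKc.exists_isMaxOn ⟨a, haK⟩ (hfC2.continuousOn.mono hKsub)
  set m : ℝ := g t₀ with hm_def
  have hmpos : 0 < m := hgpos t₀ (hKsub ht₀K) (hKoff t₀ ht₀K)
  set M : ℝ := max (f t₁) 1 with hM_def
  have hMpos : (0:ℝ) < M := lt_of_lt_of_le one_pos (le_max_right _ _)
  have hKbound : ∀ t ∈ K, (m/M) * f t ≤ g t := by
    intro t ht
    have h1 : f t ≤ M := le_trans (hmax ht) (le_max_left _ _)
    have h2 : m ≤ g t := hmin ht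
    have h3 : (m/M) * f t ≤ (m/M) * M :=
      mul_le_mul_of_nonneg_left h1 (by positivity)
    rw [div_mul_cancel₀ _ (ne_of_gt hMpos)] at h3
    linarith
  -- near-1 comparison constant
  set c₁ : ℝ := B / (4*A) with hc₁_def
  have hc₁pos : 0 < c₁ := by positivity
  have hc₁A : c₁ * A = B/4 := by
    rw [hc₁_def, div_mul_eq_mul_div, div_eq_div_iff (by positivity) (by norm_num)]; ring
  have hnear : ∀ t ∈ Set.Icc (1-δ) (1+δ), c₁ * f t ≤ g t := by
    intro t ht
    have h1 : c₁ * f t ≤ c₁ * (A * (t-1)^2) :=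
      mul_le_mul_of_nonneg_left (hfu t ht) hc₁pos.le
    have h2 : c₁ * (A * (t-1)^2) = (B/4) * (t-1)^2 := by rw [← mul_assoc, hc₁A]
    rw [h2] at h1
    exact le_trans h1 (hgq t ht)
  -- assemble β
  set β : ℝ := min (min r0 r1) (min c₁ (m/M)) with hβ_def
  have hβpos : 0 < β := lt_min (lt_min hε₀pos hε₁pos) (lt_min hc₁pos (by positivity))
  refine ⟨β, hβpos, ?_⟩
  intro t ht
  have hft0 : 0 ≤ f t := hf0 t ht
  have hmono : ∀ c : ℝ, β ≤ c → c * f t ≤ g t → β * f t ≤ g t := by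
    intro c hc hcf
    exact le_trans (mul_le_mul_of_nonneg_right hc hft0) hcf
  simp only [Set.mem_Ioi] at ht
  by_cases h1 : t < a
  · -- tail at 0
    have hr := htail0 t ht h1
    have hftpos : 0 < f t := hfpos t ht (Or.inl (by linarith))
    have : r0 * f t < g t := (lt_div_iff₀ hftpos).mp hr
    exact hmono r0 (le_trans (min_le_left _ _) (min_le_left _ _)) this.le
  · push_neg at h1
    by_cases h2 : b < t
    · -- tail at ∞
      have hr := htailtop t h2.le
      have hftpos : 0 < f t := hfpos t ht (Or.inr (by linarith))
      have : r1 * f t < g t := (lt_div_iff₀ hftpos).mp hr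
      exact hmono r1 (le_trans (min_le_left _ _) (min_le_right _ _)) this.le
    · push_neg at h2
      by_cases h3 : t ∈ Set.Ioo (1-δ) (1+δ)
      · exact hmono c₁ (le_trans (min_le_right _ _) (min_le_left _ _))
          (hnear t ⟨h3.1.le, h3.2.le⟩)
      · have htK : t ∈ K := ⟨⟨h1, h2⟩, h3⟩
        exact hmono (m/M) (le_trans (min_le_right _ _) (min_le_right _ _)) (hKbound t htK)


/-- Under regularity at `1` and positive liminfs of `g/f` at `0+` and `∞`, there is `β > 0`
with `D_g(P,Q) ≥ β·D_f(P,Q)` for all probability vectors with strictly positive entries. -/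
theorem exists_beta_divergence_bound (f g : ℝ → ℝ)
    (hf : ConvexOn ℝ (Set.Ioi 0) f) (hg : ConvexOn ℝ (Set.Ioi 0) g)
    (hfC2 : ContDiffOn ℝ 2 f (Set.Ioi 0)) (hgC2 : ContDiffOn ℝ 2 g (Set.Ioi 0))
    (hf1 : f 1 = 0) (hg1 : g 1 = 0)
    (hf'1 : deriv f 1 = 0) (hg'1 : deriv g 1 = 0)
    (hf''1 : 0 < iteratedDeriv 2 f 1) (hg''1 : 0 < iteratedDeriv 2 g 1)
    (hlim0 : (0 : EReal) < liminf (fun t => ((g t / f t : ℝ) : EReal)) (𝓝[>] (0:ℝ)))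
    (hlimtop : (0 : EReal) < liminf (fun t => ((g t / f t : ℝ) : EReal)) atTop) :
    ∃ β > (0:ℝ), ∀ (n : ℕ) (P Q : Fin n → ℝ),
      (∀ i, 0 < P i) → (∀ i, 0 < Q i) → ∑ i, P i = 1 → ∑ i, Q i = 1 →
      ∑ i, Q i * g (P i / Q i) ≥ β * ∑ i, Q i * f (P i / Q i) := by
  obtain ⟨hf0, β, hβpos, hpt⟩ := pointwise_bound' f g hf hg hfC2 hgC2 hf1 hg1 hf'1 hg'1
    hf''1 hg''1 hlim0 hlimtop
  refine ⟨β, hβpos, ?_⟩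
  intro n P Q hP hQ _ _
  rw [ge_iff_le, Finset.mul_sum]
  apply Finset.sum_le_sum
  intro i _
  have hr : (0:ℝ) < P i / Q i := div_pos (hP i) (hQ i)
  have hb := hpt _ (Set.mem_Ioi.mpr hr)
  calc β * (Q i * f (P i / Q i)) = Q i * (β * f (P i / Q i)) := by ring
    _ ≤ Q i * g (P i / Q i) := mul_le_mul_of_nonneg_left hb (hQ i).le
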